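/- For any periodic sequences S, Q, T ⊆ ℝ, the oriented elastic metric satisfies the triangle inequality: Elm^o(S,T) ≤ Elm^o(S,Q) + Elm^o(Q,T). -/

import Mathlib

/-- A periodic sequence in `ℝ` with an `m`-point motif `p` and period `l`:
the set `{p i + l * j : i ∈ Fin m, j ∈ ℤ}` where `0 ≤ p 0 < p 1 < ⋯ < p (m-1) < l`. -/
structure PSeq (m : ℕ) where
  m_pos : 0 < m
  l : ℝ
  l_pos : 0 < l
  p : Fin m → ℝ
  p_strict : StrictMono p
  p0_nonneg : 0 ≤ p ⟨0, m_pos⟩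
  p_lt : ∀ i, p i < l

namespace PSeq

variable {m : ℕ}

/-- The set of points of the periodic sequence. -/
def pts (S : PSeq m) : Set ℝ := {x | ∃ (i : Fin m) (j : ℤ), x = S.p i + S.l * j}

/-- The period is minimal: the same set of points cannot be produced with a smaller period. -/
def IsMinimal (S : PSeq m) : Prop := ∀ (m' : ℕ) (T : PSeq m'), T.pts = S.pts → S.l ≤ T.l

/-- The distance list `D` of the periodic sequence, indexed by `ZMod m`:
`D i = p (i+1) - p i` for `i < m - 1`, and `D (m-1) = (p 0 + l) - p (m-1)`. -/
noncomputable def D (S : PSeq m) : ZMod m → ℝ := fun i =>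
  letI : NeZero m := ⟨S.m_pos.ne'⟩
  if h : i.val + 1 < m then S.p ⟨i.val + 1, h⟩ - S.p ⟨i.val, i.val_lt⟩
  else S.p ⟨0, S.m_pos⟩ + S.l - S.p ⟨i.val, i.val_lt⟩

end PSeq

/-- The cyclic shift `σ_s` acting on vectors indexed by `ZMod n`: `(σ_s v) i = v (i + s)`. -/
def shiftVec {n : ℕ} (s : ZMod n) (v : ZMod n → ℝ) : ZMod n → ℝ := fun i => v (i + s)

/-- The reversal `ρ`: `(ρ v) i = v (m - 1 - i)` (note `m - 1 = -1` in `ZMod m`). -/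
def revVec {n : ℕ} (v : ZMod n → ℝ) : ZMod n → ℝ := fun i => v (-1 - i)

/-- The Minkowski sup-norm `‖v‖_∞ = max_i |v i|` of a vector indexed by `ZMod n`, `n > 0`. -/
noncomputable def supNorm {n : ℕ} (hn : 0 < n) (v : ZMod n → ℝ) : ℝ :=
  letI : NeZero n := ⟨hn.ne'⟩
  Finset.univ.sup' (Finset.univ_nonempty_iff.mpr ⟨0⟩) fun i => |v i|

namespace PSeq

/-- The distance list of the multiple `(n / m) S` of a periodic sequence `S` with `m ∣ n`,
i.e. the `(n/m)`-fold concatenation of `D S`, indexed by `ZMod n`. -/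
noncomputable def Dc {m : ℕ} (S : PSeq m) (n : ℕ) : ZMod n → ℝ :=
  fun i => S.D ((i.val : ZMod m))

/-- The oriented elastic metric `Elm^o(S,Q)`: with `n = lcm(m₁, m₂)`, the minimum over all
cyclic shifts `s ∈ ZMod n` of `‖D((n/m₁)S) - σ_s(D((n/m₂)Q))‖_∞`. -/
noncomputable def Elmo {m₁ m₂ : ℕ} (S : PSeq m₁) (Q : PSeq m₂) : ℝ :=
  letI : NeZero (Nat.lcm m₁ m₂) := ⟨(Nat.lcm_pos S.m_pos Q.m_pos).ne'⟩
  Finset.univ.inf' (Finset.univ_nonempty_iff.mpr ⟨0⟩)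
    fun s : ZMod (Nat.lcm m₁ m₂) =>
      supNorm (Nat.lcm_pos S.m_pos Q.m_pos)
        fun i => S.Dc (Nat.lcm m₁ m₂) i - shiftVec s (Q.Dc (Nat.lcm m₁ m₂)) i

/-- The unoriented elastic metric `Elm(S,Q)`: the minimum over all `2n` permutations
`σ_s` and `σ_s ∘ ρ` of `‖D((n/m₁)S) - σ(D((n/m₂)Q))‖_∞`, where `n = lcm(m₁, m₂)`. -/
noncomputable def Elm {m₁ m₂ : ℕ} (S : PSeq m₁) (Q : PSeq m₂) : ℝ :=
  letI : NeZero (Nat.lcm m₁ m₂) := ⟨(Nat.lcm_pos S.m_pos Q.m_pos).ne'⟩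
  min
    (Finset.univ.inf' (Finset.univ_nonempty_iff.mpr ⟨0⟩)
      fun s : ZMod (Nat.lcm m₁ m₂) =>
        supNorm (Nat.lcm_pos S.m_pos Q.m_pos)
          fun i => S.Dc (Nat.lcm m₁ m₂) i - shiftVec s (Q.Dc (Nat.lcm m₁ m₂)) i)
    (Finset.univ.inf' (Finset.univ_nonempty_iff.mpr ⟨0⟩)
      fun s : ZMod (Nat.lcm m₁ m₂) =>
        supNorm (Nat.lcm_pos S.m_pos Q.m_pos)
          fun i => S.Dc (Nat.lcm m₁ m₂) i - shiftVec s (revVec (Q.Dc (Nat.lcm m₁ m₂))) i)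

end PSeq


section helpers

lemma natCast_mod_of_dvd {m n : ℕ} (h : m ∣ n) (a : ℕ) :
    ((a % n : ℕ) : ZMod m) = (a : ZMod m) := by
  conv_rhs => rw [← Nat.div_add_mod a n]
  push_cast
  rw [(ZMod.natCast_eq_zero_iff n m).mpr h]
  ring

lemma cast_add_val {m N : ℕ} [NeZero N] (h : m ∣ N) (i s : ZMod N) :
    (((i + s).val : ℕ) : ZMod m) = ((i.val : ℕ) : ZMod m) + ((s.val : ℕ) : ZMod m) := by
  rw [ZMod.val_add, natCast_mod_of_dvd h, Nat.cast_add]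

lemma cast_val_cast {m n N : ℕ} [NeZero N] (hmn : m ∣ n) (i : ZMod N) :
    ((((i.val : ℕ) : ZMod n)).val : ZMod m) = ((i.val : ℕ) : ZMod m) := by
  rw [ZMod.val_natCast, natCast_mod_of_dvd hmn]

lemma supNorm_lift {n N : ℕ} (hn : 0 < n) (hN : 0 < N) (h : n ∣ N) (f : ZMod n → ℝ) :
    supNorm hN (fun i => f ((i.val : ℕ) : ZMod n)) = supNorm hn f := by
  haveI : NeZero n := ⟨hn.ne'⟩
  haveI : NeZero N := ⟨hN.ne'⟩
  unfold supNorm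
  apply le_antisymm
  · exact Finset.sup'_le _ _ fun i _ => Finset.le_sup' (fun j => |f j|) (Finset.mem_univ _)
  · refine Finset.sup'_le _ _ fun j _ => ?_
    have hval : ((((j.val : ℕ) : ZMod N).val : ℕ) : ZMod n) = j := by
      rw [ZMod.val_natCast, Nat.mod_eq_of_lt (lt_of_lt_of_le j.val_lt (Nat.le_of_dvd hN h)),
        ZMod.natCast_zmod_val]
    have := Finset.le_sup' (fun i : ZMod N => |f ((i.val : ℕ) : ZMod n)|)
      (Finset.mem_univ ((j.val : ℕ) : ZMod N))
    rwa [hval] at this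

lemma supNorm_shift {N : ℕ} (hN : 0 < N) (g : ZMod N → ℝ) (c : ZMod N) :
    supNorm hN (fun i => g (i + c)) = supNorm hN g := by
  haveI : NeZero N := ⟨hN.ne'⟩
  unfold supNorm
  apply le_antisymm
  · exact Finset.sup'_le _ _ fun i _ => Finset.le_sup' (fun j => |g j|) (Finset.mem_univ (i + c))
  · refine Finset.sup'_le _ _ fun j _ => ?_
    have := Finset.le_sup' (fun i : ZMod N => |g (i + c)|) (Finset.mem_univ (j - c))
    simpa only [sub_add_cancel] using this

end helpers

lemma key_cast {m n N : ℕ} [NeZero n] [NeZero N] (hmn : m ∣ n) (hnN : n ∣ N) (i s : ZMod N) :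
    (((((i.val : ℕ) : ZMod n) + ((s.val : ℕ) : ZMod n)).val : ℕ) : ZMod m)
      = (((i + s).val : ℕ) : ZMod m) := by
  rw [cast_add_val hmn, cast_val_cast hmn i, ZMod.val_natCast, natCast_mod_of_dvd hmn,
    cast_add_val (dvd_trans hmn hnN)]

/-- the oriented elastic metric satisfies the triangle inequality. -/
theorem Elmo_triangle {m₁ m₂ m₃ : ℕ} (S : PSeq m₁) (Q : PSeq m₂) (T : PSeq m₃) :
    PSeq.Elmo S T ≤ PSeq.Elmo S Q + PSeq.Elmo Q T := by
  have h1 := S.m_pos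
  have h2 := Q.m_pos
  have h3 := T.m_pos
  set n12 := Nat.lcm m₁ m₂ with hn12
  set n23 := Nat.lcm m₂ m₃ with hn23
  set n13 := Nat.lcm m₁ m₃ with hn13
  set N := Nat.lcm n12 n23 with hNdef
  have hp12 : 0 < n12 := Nat.lcm_pos h1 h2
  have hp23 : 0 < n23 := Nat.lcm_pos h2 h3
  have hp13 : 0 < n13 := Nat.lcm_pos h1 h3
  have hpN : 0 < N := Nat.lcm_pos hp12 hp23
  haveI : NeZero n12 := ⟨hp12.ne'⟩
  haveI : NeZero n23 := ⟨hp23.ne'⟩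
  haveI : NeZero n13 := ⟨hp13.ne'⟩
  haveI : NeZero N := ⟨hpN.ne'⟩
  have hm1_12 : m₁ ∣ n12 := Nat.dvd_lcm_left _ _
  have hm2_12 : m₂ ∣ n12 := Nat.dvd_lcm_right _ _
  have hm2_23 : m₂ ∣ n23 := Nat.dvd_lcm_left _ _
  have hm3_23 : m₃ ∣ n23 := Nat.dvd_lcm_right _ _
  have hm1_13 : m₁ ∣ n13 := Nat.dvd_lcm_left _ _
  have hm3_13 : m₃ ∣ n13 := Nat.dvd_lcm_right _ _
  have h12N : n12 ∣ N := Nat.dvd_lcm_left _ _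
  have h23N : n23 ∣ N := Nat.dvd_lcm_right _ _
  have hm1N : m₁ ∣ N := hm1_12.trans h12N
  have hm2N : m₂ ∣ N := hm2_12.trans h12N
  have hm3N : m₃ ∣ N := hm3_23.trans h23N
  have h13N : n13 ∣ N := Nat.lcm_dvd hm1N hm3N
  -- witnesses
  obtain ⟨s1, -, hs1⟩ := Finset.exists_mem_eq_inf' (Finset.univ_nonempty_iff.mpr ⟨(0 : ZMod n12)⟩)
    (fun s : ZMod n12 => supNorm hp12 fun i => S.Dc n12 i - shiftVec s (Q.Dc n12) i)
  obtain ⟨s2, -, hs2⟩ := Finset.exists_mem_eq_inf' (Finset.univ_nonempty_iff.mpr ⟨(0 : ZMod n23)⟩)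
    (fun s : ZMod n23 => supNorm hp23 fun i => Q.Dc n23 i - shiftVec s (T.Dc n23) i)
  have eSQ : PSeq.Elmo S Q = supNorm hp12 fun i => S.Dc n12 i - shiftVec s1 (Q.Dc n12) i := hs1
  have eQT : PSeq.Elmo Q T = supNorm hp23 fun i => Q.Dc n23 i - shiftVec s2 (T.Dc n23) i := hs2
  set s1' : ZMod N := ((s1.val : ℕ) : ZMod N) with hs1'
  set s2' : ZMod N := ((s2.val : ℕ) : ZMod N) with hs2'
  set sN : ZMod N := s1' + s2' with hsN
  set s3 : ZMod n13 := ((sN.val : ℕ) : ZMod n13) with hs3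
  have hs1eq : (((s1'.val : ℕ)) : ZMod n12) = s1 := by
    rw [hs1', ZMod.val_natCast,
      Nat.mod_eq_of_lt (lt_of_lt_of_le s1.val_lt (Nat.le_of_dvd hpN h12N)),
      ZMod.natCast_zmod_val]
  have hs2eq : (((s2'.val : ℕ)) : ZMod n23) = s2 := by
    rw [hs2', ZMod.val_natCast,
      Nat.mod_eq_of_lt (lt_of_lt_of_le s2.val_lt (Nat.le_of_dvd hpN h23N)),
      ZMod.natCast_zmod_val]
  -- lifted functions
  set A : ZMod N → ℝ := fun i => S.D ((i.val : ℕ) : ZMod m₁) with hA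
  set B : ZMod N → ℝ := fun i => Q.D ((i.val : ℕ) : ZMod m₂) with hB
  set C : ZMod N → ℝ := fun i => T.D ((i.val : ℕ) : ZMod m₃) with hC
  -- step 1
  have step1 : PSeq.Elmo S T ≤
      supNorm hp13 fun i => S.Dc n13 i - shiftVec s3 (T.Dc n13) i :=
    Finset.inf'_le _ (Finset.mem_univ s3)
  -- step 2 : lift to N
  have lift13 : (supNorm hp13 fun i => S.Dc n13 i - shiftVec s3 (T.Dc n13) i)
      = supNorm hpN fun i => A i - C (i + sN) := by
    rw [← supNorm_lift hp13 hpN h13N]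
    congr 1
    funext i
    simp only [hA, hC, PSeq.Dc, shiftVec, hs3]
    rw [cast_val_cast hm1_13 i, key_cast hm3_13 h13N i sN]
  -- step 4: first summand
  have lift12 : (supNorm hpN fun i => A i - B (i + s1')) = PSeq.Elmo S Q := by
    rw [eSQ, ← supNorm_lift hp12 hpN h12N]
    congr 1
    funext i
    simp only [hA, hB, PSeq.Dc, shiftVec]
    rw [cast_val_cast hm1_12 i, ← hs1eq, key_cast hm2_12 h12N i s1']
  -- step 5: second summand
  have lift23 : (supNorm hpN fun i => B (i + s1') - C (i + s1' + s2')) = PSeq.Elmo Q T := by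
    have hshift : (supNorm hpN fun i => B (i + s1') - C (i + s1' + s2'))
        = supNorm hpN fun i => B i - C (i + s2') :=
      supNorm_shift hpN (fun i => B i - C (i + s2')) s1'
    rw [hshift, eQT, ← supNorm_lift hp23 hpN h23N]
    congr 1
    funext i
    simp only [hB, hC, PSeq.Dc, shiftVec]
    rw [cast_val_cast hm2_23 i, ← hs2eq, key_cast hm3_23 h23N i s2']
  -- step 3: triangle at level N
  have step3 : (supNorm hpN fun i => A i - C (i + sN)) ≤
      (supNorm hpN fun i => A i - B (i + s1')) +
      (supNorm hpN fun i => B (i + s1') - C (i + s1' + s2')) := by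
    unfold supNorm
    refine Finset.sup'_le _ _ fun i _ => ?_
    have tri : |A i - C (i + sN)| ≤ |A i - B (i + s1')| + |B (i + s1') - C (i + s1' + s2')| := by
      have : i + sN = i + s1' + s2' := by rw [hsN]; ring
      rw [this]
      exact abs_sub_le _ _ _
    refine tri.trans (add_le_add ?_ ?_)
    · exact Finset.le_sup' (fun j : ZMod N => |A j - B (j + s1')|) (Finset.mem_univ i)
    · exact Finset.le_sup' (fun j : ZMod N => |B (j + s1') - C (j + s1' + s2')|)
        (Finset.mem_univ i)
  calc PSeq.Elmo S T ≤ _ := step1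
    _ = _ := lift13
    _ ≤ _ := step3
    _ = PSeq.Elmo S Q + PSeq.Elmo Q T := by rw [lift12, lift23]
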